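/- Let N, d ≥ 1 and for each proper subset I ⊊ {1,…,d} let ν_I : (ZMod N)^I → ℝ be a nonnegative function. Then f ↦ ‖f‖_{□,ν} is a well-defined seminorm on the space of functions (ZMod N)^d → ℝ: ‖f‖_{□,ν} ≥ 0 for all f, ‖λ f‖_{□,ν} = |λ| · ‖f‖_{□,ν} for all λ ∈ ℝ, and ‖f + g‖_{□,ν} ≤ ‖f‖_{□,ν} + ‖g‖_{□,ν} for all f, g. -/
import Mathlib
set_option linter.unusedSectionVars false
set_option maxHeartbeats 1000000


noncomputable section
open Finset

/-- `P_ω(x,y)`: the point whose `i`-th coordinate is `x i` if `ω i = false` and `y i` otherwise. -/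
def proj {ι : Type*} {N : ℕ} (ω : ι → Bool) (x y : ι → ZMod N) : ι → ZMod N :=
  fun i => if ω i then y i else x i

/-- `P_{ω_I}(x_I, y_I)` as a function on the subtype `↥I`. -/
def projI {ι : Type*} {N : ℕ} {I : Finset ι} (ω : I → Bool) (x y : ι → ZMod N) :
    I → ZMod N :=
  fun i => if ω i then y i.1 else x i.1

/-- The product of the weights `ν_I(P_{ω_I}(x_I,y_I))` over proper subsets `I ⊊ ι`
and all `ω_I ∈ {0,1}^I`. -/
def weightProd {ι : Type*} [Fintype ι] [DecidableEq ι] {N : ℕ}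
    (ν : (I : Finset ι) → (I → ZMod N) → ℝ) (x y : ι → ZMod N) : ℝ :=
  ∏ I ∈ univ.filter (fun I : Finset ι => I ≠ univ), ∏ ω : I → Bool, ν I (projI ω x y)

/-- The weighted Gowers inner product `⟨(f_ω)⟩_{□,ν}`. -/
def gowersInner {ι : Type*} [Fintype ι] [DecidableEq ι] {N : ℕ} [NeZero N]
    (ν : (I : Finset ι) → (I → ZMod N) → ℝ)
    (f : (ι → Bool) → (ι → ZMod N) → ℝ) : ℝ :=
  Finset.expect Finset.univ fun x : ι → ZMod N =>
    Finset.expect Finset.univ fun y : ι → ZMod N =>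
      (∏ ω : ι → Bool, f ω (proj ω x y)) * weightProd ν x y

/-- The weighted box norm `‖f‖_{□,ν}`. -/
def boxNorm {ι : Type*} [Fintype ι] [DecidableEq ι] {N : ℕ} [NeZero N]
    (ν : (I : Finset ι) → (I → ZMod N) → ℝ) (f : (ι → ZMod N) → ℝ) : ℝ :=
  gowersInner ν (fun _ => f) ^ (((2 : ℝ) ^ (Fintype.card ι))⁻¹)


section aux
variable {ι : Type*} [Fintype ι] [DecidableEq ι] {N : ℕ} [NeZero N]

def gSum (ν : (I : Finset ι) → (I → ZMod N) → ℝ)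
    (f : (ι → Bool) → (ι → ZMod N) → ℝ) : ℝ :=
  ∑ x : ι → ZMod N, ∑ y : ι → ZMod N,
    (∏ ω : ι → Bool, f ω (proj ω x y)) * weightProd ν x y

lemma gowersInner_eq_gSum (ν : (I : Finset ι) → (I → ZMod N) → ℝ)
    (f : (ι → Bool) → (ι → ZMod N) → ℝ) :
    gowersInner ν f = gSum ν f / ((Fintype.card (ι → ZMod N) : ℝ) * Fintype.card (ι → ZMod N)) := by
  rw [gowersInner, gSum]
  simp only [Finset.expect_eq_sum_div_card, Finset.sum_div, Finset.card_univ]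
  exact Finset.sum_congr rfl fun x _ => Finset.sum_congr rfl fun y _ => by rw [div_div]

def updEquiv (i : ι) : ((ι → ZMod N) × ZMod N) ≃ ((ι → ZMod N) × ZMod N) where
  toFun p := (Function.update p.1 i p.2, p.1 i)
  invFun p := (Function.update p.1 i p.2, p.1 i)
  left_inv p := by
    ext j
    · by_cases h : j = i <;> simp [h]
    · simp
  right_inv p := by
    ext j
    · by_cases h : j = i <;> simp [h]
    · simp

lemma sum_update (i : ι) (h : (ι → ZMod N) → ℝ) :
    ∑ x : ι → ZMod N, ∑ s : ZMod N, h (Function.update x i s) = (N : ℝ) * ∑ x, h x := by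
  have key := Fintype.sum_equiv (updEquiv (ι := ι) (N := N) i)
    (fun p => h (Function.update p.1 i p.2)) (fun p => h p.1) (fun p => rfl)
  have e1 : ∑ p : (ι → ZMod N) × ZMod N, h (Function.update p.1 i p.2)
      = ∑ x : ι → ZMod N, ∑ s : ZMod N, h (Function.update x i s) :=
    Fintype.sum_prod_type _
  have e2 : ∑ p : (ι → ZMod N) × ZMod N, h p.1
      = ∑ x : ι → ZMod N, ∑ _s : ZMod N, h x :=
    Fintype.sum_prod_type _
  rw [← e1, key, e2]
  simp [Finset.sum_const, ZMod.card, mul_comm, Finset.mul_sum]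


variable (ν : (I : Finset ι) → (I → ZMod N) → ℝ)

def Afun (i : ι) (f : (ι → Bool) → (ι → ZMod N) → ℝ) (x y : ι → ZMod N) (s : ZMod N) : ℝ :=
  ∏ ω ∈ univ.filter (fun ω : ι → Bool => ω i = false),
    f ω (proj ω (Function.update x i s) y)

def Bfun (i : ι) (f : (ι → Bool) → (ι → ZMod N) → ℝ) (x y : ι → ZMod N) (t : ZMod N) : ℝ :=
  ∏ ω ∈ univ.filter (fun ω : ι → Bool => ω i = true),
    f ω (proj ω x (Function.update y i t))

def Wfun (i : ι) (x y : ι → ZMod N) : ℝ :=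
  ∏ I ∈ univ.filter (fun I : Finset ι => I ≠ univ ∧ i ∉ I),
    ∏ ω : I → Bool, ν I (projI ω x y)

def Hfun (i : ι) (x y : ι → ZMod N) (u : ZMod N) : ℝ :=
  ∏ I ∈ univ.filter (fun I : Finset ι => I ≠ univ ∧ i ∈ I),
    ∏ ω ∈ univ.filter (fun ω : I → Bool => ∀ j : I, j.1 = i → ω j = false),
      ν I (projI ω (Function.update x i u) y)

lemma prod_f_factor (i : ι) (f : (ι → Bool) → (ι → ZMod N) → ℝ)
    (x y : ι → ZMod N) (s t : ZMod N) :
    (∏ ω : ι → Bool, f ω (proj ω (Function.update x i s) (Function.update y i t)))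
      = Afun i f x y s * Bfun i f x y t := by
  rw [← Finset.prod_filter_mul_prod_filter_not univ (fun ω : ι → Bool => ω i = false)]
  congr 1
  · refine Finset.prod_congr rfl fun ω hω => ?_
    have hω' : ω i = false := (Finset.mem_filter.1 hω).2
    congr 1
    funext j
    by_cases h : j = i
    · subst h; simp [proj, hω']
    · simp [proj, Function.update_of_ne h]
  · rw [Bfun]
    rw [show (univ.filter fun ω : ι → Bool => ¬ω i = false)
        = univ.filter (fun ω : ι → Bool => ω i = true) from
      Finset.filter_congr fun ω _ => by simp]
    refine Finset.prod_congr rfl fun ω hω => ?_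
    have hω' : ω i = true := (Finset.mem_filter.1 hω).2
    congr 1
    funext j
    by_cases h : j = i
    · subst h; simp [proj, hω']
    · simp [proj, Function.update_of_ne h]


lemma weight_factor (i : ι) (x y : ι → ZMod N) (s t : ZMod N) :
    weightProd ν (Function.update x i s) (Function.update y i t)
      = Wfun ν i x y * (Hfun ν i x y s * Hfun ν i x y t) := by
  rw [weightProd]
  rw [← Finset.prod_filter_mul_prod_filter_not
    (univ.filter fun I : Finset ι => I ≠ univ) (fun I : Finset ι => i ∉ I)]
  rw [Finset.filter_filter, Finset.filter_filter]
  congr 1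
  · -- the W part
    rw [Wfun]
    refine Finset.prod_congr rfl fun I hI => Finset.prod_congr rfl fun ω _ => ?_
    have hiI : i ∉ I := (Finset.mem_filter.1 hI).2.2
    congr 1
    funext j
    have hj : j.1 ≠ i := fun h => hiI (h ▸ j.2)
    simp [projI, Function.update_of_ne hj]
  · -- the H part
    rw [Hfun, Hfun, ← Finset.prod_mul_distrib]
    rw [show (univ.filter fun I : Finset ι => I ≠ univ ∧ ¬i ∉ I)
        = univ.filter (fun I : Finset ι => I ≠ univ ∧ i ∈ I) from
      Finset.filter_congr fun I _ => by tauto]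
    refine Finset.prod_congr rfl fun I hI => ?_
    have hiI : i ∈ I := (Finset.mem_filter.1 hI).2.2
    have hfilt : (univ.filter fun ω : I → Bool => ∀ j : I, j.1 = i → ω j = false)
        = univ.filter (fun ω : I → Bool => ω ⟨i, hiI⟩ = false) := by
      refine Finset.filter_congr fun ω _ => ?_
      constructor
      · exact fun h => h ⟨i, hiI⟩ rfl
      · rintro h j rfl
        have : j = ⟨j.1, hiI⟩ := Subtype.ext rfl
        rw [this]; exact h
    rw [hfilt]
    rw [← Finset.prod_filter_mul_prod_filter_not
      (univ : Finset (I → Bool)) (fun ω : I → Bool => ω ⟨i, hiI⟩ = false)]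
    congr 1
    · -- ω_I false at i : uses x-update with s
      refine Finset.prod_congr rfl fun ω hω => ?_
      have hω' : ω ⟨i, hiI⟩ = false := (Finset.mem_filter.1 hω).2
      congr 1
      funext j
      by_cases h : j.1 = i
      · have hj : j = ⟨i, hiI⟩ := Subtype.ext h
        subst hj
        simp [projI, hω']
      · simp [projI, Function.update_of_ne h]
    · -- ω_I true at i : bijection to false, uses y-update with t
      rw [show (univ.filter fun ω : I → Bool => ¬ω ⟨i, hiI⟩ = false)
          = univ.filter (fun ω : I → Bool => ω ⟨i, hiI⟩ = true) from
        Finset.filter_congr fun ω _ => by simp]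
      refine Finset.prod_nbij' (fun ω => Function.update ω ⟨i, hiI⟩ false)
        (fun ω => Function.update ω ⟨i, hiI⟩ true) ?_ ?_ ?_ ?_ ?_
      · intro ω hω
        simp [Finset.mem_filter]
      · intro ω hω
        simp [Finset.mem_filter]
      · intro ω hω
        have hω' : ω ⟨i, hiI⟩ = true := (Finset.mem_filter.1 hω).2
        funext j
        by_cases h : j = (⟨i, hiI⟩ : {x // x ∈ I})
        · subst h; simp [hω']
        · simp [Function.update_of_ne h]
      · intro ω hω
        have hω' : ω ⟨i, hiI⟩ = false := (Finset.mem_filter.1 hω).2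
        funext j
        by_cases h : j = (⟨i, hiI⟩ : {x // x ∈ I})
        · subst h; simp [hω']
        · simp [Function.update_of_ne h]
      · intro ω hω
        have hω' : ω ⟨i, hiI⟩ = true := (Finset.mem_filter.1 hω).2
        congr 1
        funext j
        by_cases h : j = (⟨i, hiI⟩ : {x // x ∈ I})
        · subst h; simp [projI, hω']
        · have hj1 : j.1 ≠ i := fun hh => h (Subtype.ext hh)
          simp [projI, Function.update_of_ne h, Function.update_of_ne hj1]


lemma Afun_false (i : ι) (f : (ι → Bool) → (ι → ZMod N) → ℝ) (x y : ι → ZMod N) (s : ZMod N) :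
    Afun i (fun ω => f (Function.update ω i false)) x y s = Afun i f x y s := by
  refine Finset.prod_congr rfl fun ω hω => ?_
  have hω' : ω i = false := (Finset.mem_filter.1 hω).2
  have h2 : Function.update ω i false = ω := by rw [← hω', Function.update_eq_self]
  simp only [h2]

lemma Bfun_true (i : ι) (f : (ι → Bool) → (ι → ZMod N) → ℝ) (x y : ι → ZMod N) (t : ZMod N) :
    Bfun i (fun ω => f (Function.update ω i true)) x y t = Bfun i f x y t := by
  refine Finset.prod_congr rfl fun ω hω => ?_
  have hω' : ω i = true := (Finset.mem_filter.1 hω).2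
  have h2 : Function.update ω i true = ω := by rw [← hω', Function.update_eq_self]
  simp only [h2]

lemma Bfun_to_Afun (i : ι) (f : (ι → Bool) → (ι → ZMod N) → ℝ) (x y : ι → ZMod N) (u : ZMod N) :
    Bfun i (fun ω => f (Function.update ω i false)) x y u = Afun i f x y u := by
  rw [Bfun, Afun]
  refine Finset.prod_nbij' (fun ω => Function.update ω i false)
    (fun ω => Function.update ω i true) ?_ ?_ ?_ ?_ ?_
  · intro ω hω; simp [Finset.mem_filter]
  · intro ω hω; simp [Finset.mem_filter]
  · intro ω hω
    have hω' : ω i = true := (Finset.mem_filter.1 hω).2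
    funext j
    by_cases h : j = i
    · subst h; simp [hω']
    · simp [Function.update_of_ne h]
  · intro ω hω
    have hω' : ω i = false := (Finset.mem_filter.1 hω).2
    funext j
    by_cases h : j = i
    · subst h; simp [hω']
    · simp [Function.update_of_ne h]
  · intro ω hω
    have hω' : ω i = true := (Finset.mem_filter.1 hω).2
    congr 1
    funext j
    by_cases h : j = i
    · subst h; simp [proj, hω']
    · simp [proj, Function.update_of_ne h]

lemma Afun_to_Bfun (i : ι) (f : (ι → Bool) → (ι → ZMod N) → ℝ) (x y : ι → ZMod N) (u : ZMod N) :
    Afun i (fun ω => f (Function.update ω i true)) x y u = Bfun i f x y u := by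
  rw [Bfun, Afun]
  refine Finset.prod_nbij' (fun ω => Function.update ω i true)
    (fun ω => Function.update ω i false) ?_ ?_ ?_ ?_ ?_
  · intro ω hω; simp [Finset.mem_filter]
  · intro ω hω; simp [Finset.mem_filter]
  · intro ω hω
    have hω' : ω i = false := (Finset.mem_filter.1 hω).2
    funext j
    by_cases h : j = i
    · subst h; simp [hω']
    · simp [Function.update_of_ne h]
  · intro ω hω
    have hω' : ω i = true := (Finset.mem_filter.1 hω).2
    funext j
    by_cases h : j = i
    · subst h; simp [hω']
    · simp [Function.update_of_ne h]
  · intro ω hω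
    have hω' : ω i = false := (Finset.mem_filter.1 hω).2
    congr 1
    funext j
    by_cases h : j = i
    · subst h; simp [proj, hω']
    · simp [proj, Function.update_of_ne h]

lemma Bfun_diag (i : ι) (F : (ι → ZMod N) → ℝ) (x y : ι → ZMod N) (u : ZMod N) :
    Bfun i (fun _ => F) x y u = Afun i (fun _ => F) x y u :=
  Bfun_to_Afun i (fun _ => F) x y u


lemma gSum_factor (i : ι) (f : (ι → Bool) → (ι → ZMod N) → ℝ) :
    ((N : ℝ) * N) * gSum ν f = ∑ x : ι → ZMod N, ∑ y : ι → ZMod N,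
      Wfun ν i x y * ((∑ s : ZMod N, Afun i f x y s * Hfun ν i x y s) *
        (∑ t : ZMod N, Bfun i f x y t * Hfun ν i x y t)) := by
  set G : (ι → ZMod N) → (ι → ZMod N) → ℝ := fun x y =>
    (∏ ω : ι → Bool, f ω (proj ω x y)) * weightProd ν x y with hG
  have stepB : ∀ x y : ι → ZMod N,
      (∑ s : ZMod N, ∑ t : ZMod N, G (Function.update x i s) (Function.update y i t))
        = Wfun ν i x y * ((∑ s : ZMod N, Afun i f x y s * Hfun ν i x y s) *
            (∑ t : ZMod N, Bfun i f x y t * Hfun ν i x y t)) := by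
    intro x y
    rw [Finset.sum_mul_sum, Finset.mul_sum]
    refine Finset.sum_congr rfl fun s _ => ?_
    rw [Finset.mul_sum]
    refine Finset.sum_congr rfl fun t _ => ?_
    show (∏ ω : ι → Bool, f ω (proj ω (Function.update x i s) (Function.update y i t))) *
        weightProd ν (Function.update x i s) (Function.update y i t) = _
    rw [prod_f_factor, weight_factor]
    ring
  have h1 : ∀ x' : ι → ZMod N,
      (∑ y : ι → ZMod N, ∑ t : ZMod N, G x' (Function.update y i t)) = (N : ℝ) * ∑ y, G x' y :=
    fun x' => sum_update i (G x')
  have hgs : gSum ν f = ∑ x : ι → ZMod N, ∑ y : ι → ZMod N, G x y := rfl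
  calc ((N : ℝ) * N) * gSum ν f
      = (N : ℝ) * ((N : ℝ) * ∑ x : ι → ZMod N, ∑ y : ι → ZMod N, G x y) := by rw [hgs]; ring
    _ = (N : ℝ) * ∑ x : ι → ZMod N, ∑ s : ZMod N,
          (fun x' => ∑ y : ι → ZMod N, G x' y) (Function.update x i s) := by
        rw [sum_update i (fun x' => ∑ y : ι → ZMod N, G x' y)]
    _ = ∑ x : ι → ZMod N, ∑ s : ZMod N, (N : ℝ) * ∑ y : ι → ZMod N,
          G (Function.update x i s) y := by
        rw [Finset.mul_sum]
        exact Finset.sum_congr rfl fun x _ => by rw [Finset.mul_sum]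
    _ = ∑ x : ι → ZMod N, ∑ s : ZMod N, ∑ y : ι → ZMod N, ∑ t : ZMod N,
          G (Function.update x i s) (Function.update y i t) :=
        Finset.sum_congr rfl fun x _ => Finset.sum_congr rfl fun s _ => (h1 _).symm
    _ = ∑ x : ι → ZMod N, ∑ y : ι → ZMod N, ∑ s : ZMod N, ∑ t : ZMod N,
          G (Function.update x i s) (Function.update y i t) :=
        Finset.sum_congr rfl fun x _ => Finset.sum_comm
    _ = _ := Finset.sum_congr rfl fun x _ => Finset.sum_congr rfl fun y _ => stepB x y


lemma Wfun_nonneg (hν : ∀ I : Finset ι, I ≠ univ → ∀ z, 0 ≤ ν I z) (i : ι)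
    (x y : ι → ZMod N) : 0 ≤ Wfun ν i x y :=
  Finset.prod_nonneg fun I hI => Finset.prod_nonneg fun ω _ =>
    hν I (Finset.mem_filter.1 hI).2.1 _

lemma cs_helper (W Φ Ψ : (ι → ZMod N) → (ι → ZMod N) → ℝ) (hW : ∀ x y, 0 ≤ W x y) :
    (∑ x : ι → ZMod N, ∑ y : ι → ZMod N, W x y * (Φ x y * Ψ x y)) ^ 2 ≤
      (∑ x : ι → ZMod N, ∑ y : ι → ZMod N, W x y * (Φ x y * Φ x y)) *
      (∑ x : ι → ZMod N, ∑ y : ι → ZMod N, W x y * (Ψ x y * Ψ x y)) := by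
  have e : ∀ g : (ι → ZMod N) → (ι → ZMod N) → ℝ,
      (∑ x : ι → ZMod N, ∑ y : ι → ZMod N, g x y)
        = ∑ p : (ι → ZMod N) × (ι → ZMod N), g p.1 p.2 :=
    fun g => (Fintype.sum_prod_type (fun p : (ι → ZMod N) × (ι → ZMod N) => g p.1 p.2)).symm
  rw [e, e, e]
  have key := Finset.sum_mul_sq_le_sq_mul_sq Finset.univ
    (fun p : (ι → ZMod N) × (ι → ZMod N) => Real.sqrt (W p.1 p.2) * Φ p.1 p.2)
    (fun p => Real.sqrt (W p.1 p.2) * Ψ p.1 p.2)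
  have e1 : ∀ p : (ι → ZMod N) × (ι → ZMod N),
      (Real.sqrt (W p.1 p.2) * Φ p.1 p.2) * (Real.sqrt (W p.1 p.2) * Ψ p.1 p.2)
        = W p.1 p.2 * (Φ p.1 p.2 * Ψ p.1 p.2) := by
    intro p
    have : Real.sqrt (W p.1 p.2) * Real.sqrt (W p.1 p.2) = W p.1 p.2 :=
      Real.mul_self_sqrt (hW _ _)
    calc (Real.sqrt (W p.1 p.2) * Φ p.1 p.2) * (Real.sqrt (W p.1 p.2) * Ψ p.1 p.2)
        = (Real.sqrt (W p.1 p.2) * Real.sqrt (W p.1 p.2)) * (Φ p.1 p.2 * Ψ p.1 p.2) := by ring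
      _ = _ := by rw [this]
  have e2 : ∀ p : (ι → ZMod N) × (ι → ZMod N),
      (Real.sqrt (W p.1 p.2) * Φ p.1 p.2) ^ 2 = W p.1 p.2 * (Φ p.1 p.2 * Φ p.1 p.2) := by
    intro p
    rw [mul_pow, Real.sq_sqrt (hW _ _)]
    ring
  have e3 : ∀ p : (ι → ZMod N) × (ι → ZMod N),
      (Real.sqrt (W p.1 p.2) * Ψ p.1 p.2) ^ 2 = W p.1 p.2 * (Ψ p.1 p.2 * Ψ p.1 p.2) := by
    intro p
    rw [mul_pow, Real.sq_sqrt (hW _ _)]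
    ring
  simp only [e1, e2, e3] at key
  exact key

lemma gSum_sq_le (hν : ∀ I : Finset ι, I ≠ univ → ∀ z, 0 ≤ ν I z) (i : ι)
    (f : (ι → Bool) → (ι → ZMod N) → ℝ) :
    gSum ν f ^ 2 ≤ gSum ν (fun ω => f (Function.update ω i false)) *
      gSum ν (fun ω => f (Function.update ω i true)) := by
  have hN : (0 : ℝ) < (N : ℝ) * N := by
    have : (0 : ℝ) < (N : ℝ) := by
      exact_mod_cast Nat.pos_of_ne_zero (NeZero.ne N)
    positivity
  have h0 := gSum_factor ν i f
  have hF := gSum_factor ν i (fun ω => f (Function.update ω i false))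
  have hT := gSum_factor ν i (fun ω => f (Function.update ω i true))
  simp only [Afun_false, Bfun_to_Afun] at hF
  simp only [Afun_to_Bfun, Bfun_true] at hT
  have key : (((N : ℝ) * N) * gSum ν f) ^ 2 ≤
      (((N : ℝ) * N) * gSum ν (fun ω => f (Function.update ω i false))) *
      (((N : ℝ) * N) * gSum ν (fun ω => f (Function.update ω i true))) := by
    rw [h0, hF, hT]
    exact cs_helper (Wfun ν i)
      (fun x y => ∑ s : ZMod N, Afun i f x y s * Hfun ν i x y s)
      (fun x y => ∑ t : ZMod N, Bfun i f x y t * Hfun ν i x y t)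
      (Wfun_nonneg ν hν i)
  have h2 : ((N : ℝ) * N) ^ 2 * (gSum ν f ^ 2) ≤
      ((N : ℝ) * N) ^ 2 * (gSum ν (fun ω => f (Function.update ω i false)) *
        gSum ν (fun ω => f (Function.update ω i true))) := by
    calc ((N : ℝ) * N) ^ 2 * (gSum ν f ^ 2) = (((N : ℝ) * N) * gSum ν f) ^ 2 := by ring
      _ ≤ _ := key.trans_eq (by ring)
  exact le_of_mul_le_mul_left h2 (by positivity)

lemma gSum_diag_nonneg [Nonempty ι] (hν : ∀ I : Finset ι, I ≠ univ → ∀ z, 0 ≤ ν I z)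
    (F : (ι → ZMod N) → ℝ) : 0 ≤ gSum ν (fun _ => F) := by
  obtain ⟨i⟩ := ‹Nonempty ι›
  have hN : (0 : ℝ) < (N : ℝ) * N := by
    have : (0 : ℝ) < (N : ℝ) := by
      exact_mod_cast Nat.pos_of_ne_zero (NeZero.ne N)
    positivity
  have h0 := gSum_factor ν i (fun _ => F)
  simp only [Bfun_diag] at h0
  have h2 : 0 ≤ ((N : ℝ) * N) * gSum ν (fun _ => F) := by
    rw [h0]
    refine Finset.sum_nonneg fun x _ => Finset.sum_nonneg fun y _ => ?_
    exact mul_nonneg (Wfun_nonneg ν hν i x y) (mul_self_nonneg _)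
  have h3 : ((N : ℝ) * N) * 0 ≤ ((N : ℝ) * N) * gSum ν (fun _ => F) := by simpa using h2
  exact le_of_mul_le_mul_left h3 hN


lemma gowersInner_diag_nonneg [Nonempty ι] (hν : ∀ I : Finset ι, I ≠ univ → ∀ z, 0 ≤ ν I z)
    (F : (ι → ZMod N) → ℝ) : 0 ≤ gowersInner ν (fun _ => F) := by
  rw [gowersInner_eq_gSum]
  have := gSum_diag_nonneg ν hν F
  positivity

lemma gowersInner_sq_le (hν : ∀ I : Finset ι, I ≠ univ → ∀ z, 0 ≤ ν I z) (i : ι)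
    (f : (ι → Bool) → (ι → ZMod N) → ℝ) :
    gowersInner ν f ^ 2 ≤ gowersInner ν (fun ω => f (Function.update ω i false)) *
      gowersInner ν (fun ω => f (Function.update ω i true)) := by
  rw [gowersInner_eq_gSum, gowersInner_eq_gSum, gowersInner_eq_gSum]
  have hM : (0 : ℝ) < (Fintype.card (ι → ZMod N) : ℝ) * (Fintype.card (ι → ZMod N) : ℝ) := by
    have : (0 : ℝ) < (Fintype.card (ι → ZMod N) : ℝ) := by
      exact_mod_cast Fintype.card_pos
    positivity
  rw [div_pow, div_mul_div_comm]
  have hden : (((Fintype.card (ι → ZMod N) : ℝ)) * (Fintype.card (ι → ZMod N) : ℝ)) ^ 2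
      = ((Fintype.card (ι → ZMod N) : ℝ) * (Fintype.card (ι → ZMod N) : ℝ)) *
        ((Fintype.card (ι → ZMod N) : ℝ) * (Fintype.card (ι → ZMod N) : ℝ)) := by ring
  rw [hden]
  exact (div_le_div_iff_of_pos_right (by positivity)).2 (gSum_sq_le ν hν i f)


lemma gcs_aux (hν : ∀ I : Finset ι, I ≠ univ → ∀ z, 0 ≤ ν I z)
    (f : (ι → Bool) → (ι → ZMod N) → ℝ) (S : Finset ι) :
    gowersInner ν f ^ (2 ^ Fintype.card ι) ≤
      ∏ τ : ι → Bool, gowersInner ν (fun ω => f (S.piecewise τ ω)) := by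
  induction S using Finset.induction with
  | empty =>
    have : ∀ τ : ι → Bool, (fun ω => f ((∅ : Finset ι).piecewise τ ω)) = f := by
      intro τ; funext ω; rw [Finset.piecewise_empty]
    simp only [this]
    rw [Finset.prod_const, Finset.card_univ]
    have : Fintype.card (ι → Bool) = 2 ^ Fintype.card ι := by
      rw [Fintype.card_fun, Fintype.card_bool]
    rw [this]
  | @insert i S hiS ih =>
    refine ih.trans ?_
    set F : (ι → Bool) → ℝ := fun τ => gowersInner ν (fun ω => f (S.piecewise τ ω)) with hFdefEq
    set G : (ι → Bool) → ℝ :=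
      fun τ => gowersInner ν (fun ω => f ((insert i S).piecewise τ ω)) with hGdefEq
    have hpw : ∀ (τ : ι → Bool) (b : Bool) (ω : ι → Bool),
        S.piecewise (Function.update τ i b) ω = S.piecewise τ ω := by
      intro τ b ω
      funext j
      by_cases hjS : j ∈ S
      · have hji : j ≠ i := fun h => hiS (h ▸ hjS)
        simp [Finset.piecewise, hjS, Function.update_of_ne hji]
      · simp [Finset.piecewise, hjS]
    have hFind : ∀ (τ : ι → Bool) (b : Bool), F (Function.update τ i b) = F τ := by
      intro τ b
      show gowersInner ν (fun ω => f (S.piecewise (Function.update τ i b) ω))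
        = gowersInner ν (fun ω => f (S.piecewise τ ω))
      congr 1
      funext ω
      rw [hpw]
    have split : ∀ g : (ι → Bool) → ℝ, (∏ τ : ι → Bool, g τ)
        = (∏ τ ∈ univ.filter (fun τ : ι → Bool => τ i = false), g τ) *
          ∏ τ ∈ univ.filter (fun τ : ι → Bool => ¬τ i = false), g τ :=
      fun g => (Finset.prod_filter_mul_prod_filter_not univ _ g).symm
    rw [split F, split G]
    have hF2 : (∏ τ ∈ univ.filter (fun τ : ι → Bool => ¬τ i = false), F τ)
        = ∏ τ ∈ univ.filter (fun τ : ι → Bool => τ i = false), F τ := by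
      refine Finset.prod_nbij' (fun τ => Function.update τ i false)
        (fun τ => Function.update τ i true) ?_ ?_ ?_ ?_ ?_
      · intro τ hτ; simp [Finset.mem_filter]
      · intro τ hτ; simp [Finset.mem_filter]
      · intro τ hτ
        have hτ' : τ i = true := by simpa using (Finset.mem_filter.1 hτ).2
        funext j
        by_cases h : j = i
        · subst h; simp [hτ']
        · simp [Function.update_of_ne h]
      · intro τ hτ
        have hτ' : τ i = false := (Finset.mem_filter.1 hτ).2
        funext j
        by_cases h : j = i
        · subst h; simp [hτ']
        · simp [Function.update_of_ne h]
      · intro τ hτ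
        exact (hFind τ false).symm
    have hG2 : (∏ τ ∈ univ.filter (fun τ : ι → Bool => ¬τ i = false), G τ)
        = ∏ τ ∈ univ.filter (fun τ : ι → Bool => τ i = false),
            G (Function.update τ i true) := by
      refine Finset.prod_nbij' (fun τ => Function.update τ i false)
        (fun τ => Function.update τ i true) ?_ ?_ ?_ ?_ ?_
      · intro τ hτ; simp [Finset.mem_filter]
      · intro τ hτ; simp [Finset.mem_filter]
      · intro τ hτ
        have hτ' : τ i = true := by simpa using (Finset.mem_filter.1 hτ).2
        funext j
        by_cases h : j = i
        · subst h; simp [hτ']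
        · simp [Function.update_of_ne h]
      · intro τ hτ
        have hτ' : τ i = false := (Finset.mem_filter.1 hτ).2
        funext j
        by_cases h : j = i
        · subst h; simp [hτ']
        · simp [Function.update_of_ne h]
      · intro τ hτ
        have hτ' : τ i = true := by simpa using (Finset.mem_filter.1 hτ).2
        have h1 : Function.update (Function.update τ i false) i true
            = Function.update τ i true := Function.update_idem ..
        have h2 : Function.update τ i true = τ := by rw [← hτ', Function.update_eq_self]
        rw [h1, h2]
    rw [hF2, hG2, ← Finset.prod_mul_distrib, ← Finset.prod_mul_distrib]
    refine Finset.prod_le_prod (fun τ _ => mul_self_nonneg _) (fun τ hτ => ?_)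
    have hτ' : τ i = false := (Finset.mem_filter.1 hτ).2
    have key := gowersInner_sq_le ν hν i (fun ω => f (S.piecewise τ ω))
    have e0 : (fun ω => (fun ω' => f (S.piecewise τ ω')) (Function.update ω i false))
        = (fun ω => f ((insert i S).piecewise τ ω)) := by
      funext ω
      have harg : S.piecewise τ (Function.update ω i false) = (insert i S).piecewise τ ω := by
        funext j
        by_cases h : j = i
        · subst h; simp [Finset.piecewise, hiS, hτ']
        · by_cases hjS : j ∈ S
          · simp [Finset.piecewise, hjS, Finset.mem_insert, h]
          · have hmem : j ∉ insert i S := by simp [Finset.mem_insert, h, hjS]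
            simp [Finset.piecewise, hjS, hmem, Function.update_of_ne h]
      show f (S.piecewise τ (Function.update ω i false)) = _
      rw [harg]
    have e1 : (fun ω => (fun ω' => f (S.piecewise τ ω')) (Function.update ω i true))
        = (fun ω => f ((insert i S).piecewise (Function.update τ i true) ω)) := by
      funext ω
      have harg : S.piecewise τ (Function.update ω i true)
          = (insert i S).piecewise (Function.update τ i true) ω := by
        funext j
        by_cases h : j = i
        · subst h; simp [Finset.piecewise, hiS]
        · by_cases hjS : j ∈ S
          · simp [Finset.piecewise, hjS, Finset.mem_insert, h, Function.update_of_ne h]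
          · have hmem : j ∉ insert i S := by simp [Finset.mem_insert, h, hjS]
            simp [Finset.piecewise, hjS, hmem, Function.update_of_ne h]
      show f (S.piecewise τ (Function.update ω i true)) = _
      rw [harg]
    rw [e0, e1] at key
    have key2 : F τ ^ 2 ≤ G τ * G (Function.update τ i true) := key
    calc F τ * F τ = F τ ^ 2 := by ring
      _ ≤ _ := key2

lemma gcs (hν : ∀ I : Finset ι, I ≠ univ → ∀ z, 0 ≤ ν I z)
    (f : (ι → Bool) → (ι → ZMod N) → ℝ) :
    gowersInner ν f ^ (2 ^ Fintype.card ι) ≤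
      ∏ τ : ι → Bool, gowersInner ν (fun _ => f τ) := by
  have h := gcs_aux ν hν f univ
  have e : ∀ τ : ι → Bool, (fun ω => f (Finset.univ.piecewise τ ω))
      = (fun _ : ι → Bool => f τ) := by
    intro τ; funext ω; rw [Finset.piecewise_univ]
  calc gowersInner ν f ^ (2 ^ Fintype.card ι)
      ≤ ∏ τ : ι → Bool, gowersInner ν (fun ω => f (Finset.univ.piecewise τ ω)) := h
    _ = ∏ τ : ι → Bool, gowersInner ν (fun _ => f τ) :=
        Finset.prod_congr rfl fun τ _ => by rw [e τ]

end aux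

/-- The weighted box norm is a seminorm. -/
theorem boxNorm_is_seminorm (N d : ℕ) [NeZero N] (hd : 1 ≤ d)
    (ν : (I : Finset (Fin d)) → (I → ZMod N) → ℝ)
    (hν : ∀ I : Finset (Fin d), I ≠ univ → ∀ z, 0 ≤ ν I z) :
    (∀ f : (Fin d → ZMod N) → ℝ, 0 ≤ boxNorm ν f) ∧
    (∀ (lam : ℝ) (f : (Fin d → ZMod N) → ℝ),
      boxNorm ν (fun x => lam * f x) = |lam| * boxNorm ν f) ∧
    (∀ f g : (Fin d → ZMod N) → ℝ, boxNorm ν (f + g) ≤ boxNorm ν f + boxNorm ν g) := by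
  haveI : Nonempty (Fin d) := ⟨⟨0, hd⟩⟩
  set D := Fintype.card (Fin d) with hDdef
  have hD0 : D ≠ 0 := by rw [hDdef, Fintype.card_fin]; omega
  have heven : Even (2 ^ D) := (Nat.even_pow).2 ⟨even_two, hD0⟩
  have hn0 : (2 : ℕ) ^ D ≠ 0 := pow_ne_zero _ two_ne_zero
  have hcast : ((2 ^ D : ℕ) : ℝ) = (2 : ℝ) ^ D := by push_cast; ring
  have hE2 : ((2 : ℝ) ^ D) ≠ 0 := by positivity
  have hepos : (0 : ℝ) ≤ ((2 : ℝ) ^ D)⁻¹ := by positivity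
  have hcardfun : Fintype.card (Fin d → Bool) = 2 ^ D := by
    rw [Fintype.card_fun, Fintype.card_bool]
  have hExp : ∀ A : ℝ, 0 ≤ A → (A ^ (2 ^ D : ℕ)) ^ (((2 : ℝ) ^ D)⁻¹) = A := by
    intro A hA
    rw [← Real.rpow_natCast A (2 ^ D), ← Real.rpow_mul hA, hcast,
      mul_inv_cancel₀ hE2, Real.rpow_one]
  have hnonneg : ∀ f : (Fin d → ZMod N) → ℝ, 0 ≤ gowersInner ν (fun _ => f) :=
    fun f => gowersInner_diag_nonneg ν hν f
  have hbox : ∀ F : (Fin d → ZMod N) → ℝ,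
      gowersInner ν (fun _ => F) = boxNorm ν F ^ (2 ^ D : ℕ) := by
    intro F
    rw [boxNorm, ← Real.rpow_natCast (gowersInner ν (fun _ => F) ^ (((2 : ℝ) ^ D)⁻¹)) (2 ^ D),
      ← Real.rpow_mul (hnonneg F), hcast, inv_mul_cancel₀ hE2, Real.rpow_one]
  have hBN : ∀ f : (Fin d → ZMod N) → ℝ, 0 ≤ boxNorm ν f :=
    fun f => Real.rpow_nonneg (hnonneg f) _
  refine ⟨hBN, ?_, ?_⟩
  · intro lam f
    have hgs : gSum ν (fun _ => fun x => lam * f x)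
        = lam ^ (2 ^ D : ℕ) * gSum ν (fun _ => f) := by
      rw [gSum, gSum, Finset.mul_sum]
      refine Finset.sum_congr rfl fun x _ => ?_
      rw [Finset.mul_sum]
      refine Finset.sum_congr rfl fun y _ => ?_
      rw [Finset.prod_mul_distrib, Finset.prod_const, Finset.card_univ, hcardfun]
      ring
    have hmul : gowersInner ν (fun _ => fun x => lam * f x)
        = lam ^ (2 ^ D : ℕ) * gowersInner ν (fun _ => f) := by
      rw [gowersInner_eq_gSum, gowersInner_eq_gSum, hgs, mul_div_assoc]
    rw [boxNorm, boxNorm, hmul, ← Even.pow_abs heven lam,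
      Real.mul_rpow (by positivity) (hnonneg f)]
    congr 1
    exact hExp |lam| (abs_nonneg lam)
  · intro f g
    have hTbound : ∀ T : Finset (Fin d → Bool),
        gowersInner ν (fun ω => if ω ∈ T then f else g)
          ≤ ∏ τ : Fin d → Bool, (if τ ∈ T then boxNorm ν f else boxNorm ν g) := by
      intro T
      have h1 := gcs ν hν (fun ω => if ω ∈ T then f else g)
      have h2 : (∏ τ : Fin d → Bool, gowersInner ν (fun _ => if τ ∈ T then f else g))
          = (∏ τ : Fin d → Bool, (if τ ∈ T then boxNorm ν f else boxNorm ν g)) ^ (2 ^ D : ℕ) := by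
        rw [← Finset.prod_pow]
        refine Finset.prod_congr rfl fun τ _ => ?_
        by_cases hτ : τ ∈ T
        · simp only [hτ, if_true]; exact hbox f
        · simp only [hτ, if_false]; exact hbox g
      rw [h2] at h1
      have hBnn : 0 ≤ ∏ τ : Fin d → Bool, (if τ ∈ T then boxNorm ν f else boxNorm ν g) :=
        Finset.prod_nonneg fun τ _ => by
          by_cases hτ : τ ∈ T <;> simp [hτ, hBN f, hBN g]
      have h3 : |gowersInner ν (fun ω => if ω ∈ T then f else g)| ^ (2 ^ D : ℕ)
          ≤ (∏ τ : Fin d → Bool, (if τ ∈ T then boxNorm ν f else boxNorm ν g)) ^ (2 ^ D : ℕ) := by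
        rw [Even.pow_abs heven]
        exact h1
      exact (le_abs_self _).trans
        ((pow_le_pow_iff_left₀ (abs_nonneg _) hBnn hn0).1 h3)
    have hpoint : ∀ x y : Fin d → ZMod N, (∏ ω : Fin d → Bool, (f + g) (proj ω x y))
        = ∑ T ∈ (univ : Finset (Fin d → Bool)).powerset,
            ∏ ω : Fin d → Bool, (if ω ∈ T then f else g) (proj ω x y) := by
      intro x y
      have h0 : (∏ ω : Fin d → Bool, (f + g) (proj ω x y))
          = ∏ ω : Fin d → Bool, (f (proj ω x y) + g (proj ω x y)) := rfl
      rw [h0, Finset.prod_add]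
      refine Finset.sum_congr rfl fun T hT => ?_
      have hT' : T ⊆ univ := Finset.mem_powerset.1 hT
      simp only [ite_apply]
      rw [Finset.prod_ite]
      congr 1
      · apply Finset.prod_congr _ fun ω _ => rfl
        ext ω; simp
      · apply Finset.prod_congr _ fun ω _ => rfl
        ext ω; simp [Finset.mem_sdiff]
    have hgsum : gSum ν (fun _ => f + g)
        = ∑ T ∈ (univ : Finset (Fin d → Bool)).powerset,
            gSum ν (fun ω => if ω ∈ T then f else g) := by
      rw [gSum]
      have : ∀ x y : Fin d → ZMod N,
          (∏ ω : Fin d → Bool, (f + g) (proj ω x y)) * weightProd ν x y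
            = ∑ T ∈ (univ : Finset (Fin d → Bool)).powerset,
                (∏ ω : Fin d → Bool, (if ω ∈ T then f else g) (proj ω x y))
                  * weightProd ν x y := by
        intro x y
        rw [hpoint x y, Finset.sum_mul]
      calc (∑ x : Fin d → ZMod N, ∑ y : Fin d → ZMod N,
            (∏ ω : Fin d → Bool, (f + g) (proj ω x y)) * weightProd ν x y)
          = ∑ x : Fin d → ZMod N, ∑ y : Fin d → ZMod N,
              ∑ T ∈ (univ : Finset (Fin d → Bool)).powerset,
                (∏ ω : Fin d → Bool, (if ω ∈ T then f else g) (proj ω x y))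
                  * weightProd ν x y :=
            Finset.sum_congr rfl fun x _ => Finset.sum_congr rfl fun y _ => this x y
        _ = ∑ x : Fin d → ZMod N,
              ∑ T ∈ (univ : Finset (Fin d → Bool)).powerset, ∑ y : Fin d → ZMod N,
                (∏ ω : Fin d → Bool, (if ω ∈ T then f else g) (proj ω x y))
                  * weightProd ν x y :=
            Finset.sum_congr rfl fun x _ => Finset.sum_comm
        _ = _ := Finset.sum_comm
    have hexpand : gowersInner ν (fun _ => f + g)
        = ∑ T ∈ (univ : Finset (Fin d → Bool)).powerset,
            gowersInner ν (fun ω => if ω ∈ T then f else g) := by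
      rw [gowersInner_eq_gSum, hgsum, Finset.sum_div]
      exact Finset.sum_congr rfl fun T _ => (gowersInner_eq_gSum ν _).symm
    have hsum : (∑ T ∈ (univ : Finset (Fin d → Bool)).powerset,
          ∏ τ : Fin d → Bool, (if τ ∈ T then boxNorm ν f else boxNorm ν g))
        = (boxNorm ν f + boxNorm ν g) ^ (2 ^ D : ℕ) := by
      have hpa := Finset.prod_add (fun _ : Fin d → Bool => boxNorm ν f)
        (fun _ : Fin d → Bool => boxNorm ν g) univ
      rw [Finset.prod_const, Finset.card_univ, hcardfun] at hpa
      rw [hpa]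
      refine Finset.sum_congr rfl fun T hT => ?_
      rw [Finset.prod_ite]
      congr 1
      · apply Finset.prod_congr _ fun ω _ => rfl
        ext ω; simp
      · apply Finset.prod_congr _ fun ω _ => rfl
        ext ω; simp [Finset.mem_sdiff]
    have hstep : gowersInner ν (fun _ => f + g)
        ≤ (boxNorm ν f + boxNorm ν g) ^ (2 ^ D : ℕ) := by
      rw [hexpand, ← hsum]
      exact Finset.sum_le_sum fun T _ => hTbound T
    have hfg : (fun _ : Fin d → Bool => f + g) = (fun _ : Fin d → Bool => (f + g)) := rfl
    calc boxNorm ν (f + g)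
        = gowersInner ν (fun _ => f + g) ^ (((2 : ℝ) ^ D)⁻¹) := rfl
      _ ≤ ((boxNorm ν f + boxNorm ν g) ^ (2 ^ D : ℕ)) ^ (((2 : ℝ) ^ D)⁻¹) :=
          Real.rpow_le_rpow (hnonneg (f + g)) hstep hepos
      _ = boxNorm ν f + boxNorm ν g := hExp _ (add_nonneg (hBN f) (hBN g))


end
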